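/- Let B be a real p×q matrix and n ≥ 1. Then (X + 1)^{(n-1)q} divides the characteristic polynomial of C, and (X + 1)^{(n-1)p} divides the characteristic polynomial of D; that is, C has −1 as an eigenvalue with algebraic multiplicity at least (n−1)q, and D has −1 as an eigenvalue with algebraic multiplicity at least (n−1)p. -/

import Mathlib

open Matrix

/-- The matrix `C` of Construction III: indexed by `Fin p ⊕ (Fin n × Fin q)`,
first block row `[0, B, …, B]`, and the `n×n` grid of `q×q` blocks has zero diagonal blocks
and identity blocks `I_q` off the diagonal. -/
def matC3 (p q n : ℕ) (B : Matrix (Fin p) (Fin q) ℝ) :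
    Matrix (Fin p ⊕ Fin n × Fin q) (Fin p ⊕ Fin n × Fin q) ℝ :=
  Matrix.of fun a b =>
    match a, b with
    | Sum.inl i, Sum.inr (_, j) => B i j
    | Sum.inr (_, j), Sum.inl i => B i j
    | Sum.inr (k, j), Sum.inr (k', j') => if k ≠ k' ∧ j = j' then 1 else 0
    | _, _ => 0

/-- The matrix `D` of Construction III: indexed by `Fin q ⊕ (Fin n × Fin p)`,
first block row `[0, Bᵀ, …, Bᵀ]`, and the `n×n` grid of `p×p` blocks has zero diagonal blocks
and identity blocks `I_p` off the diagonal. -/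
def matD3 (p q n : ℕ) (B : Matrix (Fin p) (Fin q) ℝ) :
    Matrix (Fin q ⊕ Fin n × Fin p) (Fin q ⊕ Fin n × Fin p) ℝ :=
  Matrix.of fun a b =>
    match a, b with
    | Sum.inl j, Sum.inr (_, i) => B i j
    | Sum.inr (_, i), Sum.inl j => B i j
    | Sum.inr (k, i), Sum.inr (k', i') => if k ≠ k' ∧ i = i' then 1 else 0
    | _, _ => 0

open Polynomial in
lemma matC3_aux (p q n : ℕ) (hn : 1 ≤ n) (B : Matrix (Fin p) (Fin q) ℝ) :
    (X + 1) ^ ((n - 1) * q) ∣ (matC3 p q n B).charpoly := by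
  classical
  set A : Matrix (Fin p ⊕ Fin n × Fin q) (Fin p ⊕ Fin n × Fin q) ℝ := matC3 p q n B + 1 with hA
  set z : Fin n := ⟨0, hn⟩ with hz
  -- The nullspace matrix
  set M : Matrix (Fin p ⊕ Fin n × Fin q) ({k : Fin n // ¬ k = z} × Fin q) ℝ :=
    Matrix.of (fun a b =>
      match a with
      | Sum.inl _ => 0
      | Sum.inr (k', j') =>
          if j' = b.2 then (if k' = z then 1 else 0) - (if k' = (b.1 : Fin n) then 1 else 0)
          else 0) with hM
  have hMinl : ∀ i (b : {k : Fin n // ¬ k = z} × Fin q), M (Sum.inl i) b = 0 := fun _ _ => rfl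
  have hMinr : ∀ k' j' (b : {k : Fin n // ¬ k = z} × Fin q), M (Sum.inr (k', j')) b =
      if j' = b.2 then (if k' = z then 1 else 0) - (if k' = (b.1 : Fin n) then 1 else 0)
      else 0 := fun _ _ _ => rfl
  have hAM : A * M = 0 := by
    ext a b
    obtain ⟨⟨k, hk⟩, j⟩ := b
    rw [Matrix.mul_apply, Matrix.zero_apply, Fintype.sum_sum_type]
    cases a with
    | inl i =>
        have h1 : ∀ i', A (Sum.inl i) (Sum.inl i') * M (Sum.inl i') (⟨k, hk⟩, j) = 0 := by
          intro i'; rw [hMinl, mul_zero]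
        have h2 : ∀ x : Fin n × Fin q, A (Sum.inl i) (Sum.inr x) = B i x.2 := by
          rintro ⟨k', j'⟩
          simp [hA, Matrix.add_apply, matC3, Matrix.one_apply]
        simp only [h1, h2, Finset.sum_const_zero, zero_add, hMinr, Fintype.sum_prod_type]
        simp only [mul_ite, mul_zero, Fintype.sum_ite_eq']
        simp [mul_sub, mul_ite, mul_one, mul_zero, Finset.sum_sub_distrib,
          Fintype.sum_ite_eq']
    | inr x =>
        obtain ⟨k', j'⟩ := x
        have h1 : ∀ i', A (Sum.inr (k', j')) (Sum.inl i') * M (Sum.inl i') (⟨k, hk⟩, j) = 0 := by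
          intro i'; rw [hMinl, mul_zero]
        have h2 : ∀ (k'' : Fin n) (j'' : Fin q),
            A (Sum.inr (k', j')) (Sum.inr (k'', j'')) = if j' = j'' then 1 else 0 := by
          intro k'' j''
          by_cases e1 : k' = k'' <;> by_cases e2 : j' = j'' <;>
            simp [hA, Matrix.add_apply, matC3, Matrix.one_apply, e1, e2, Prod.ext_iff]
        simp only [h1, h2, Finset.sum_const_zero, zero_add, hMinr, Fintype.sum_prod_type]
        have step : ∀ k'' : Fin n,
            (∑ j'' : Fin q, (if j' = j'' then (1:ℝ) else 0) *
              (if j'' = j then (if k'' = z then 1 else 0) - (if k'' = k then 1 else 0) else 0))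
            = if j' = j then (if k'' = z then 1 else 0) - (if k'' = k then 1 else 0) else 0 := by
          intro k''
          simp only [ite_mul, one_mul, zero_mul, Fintype.sum_ite_eq]
        rw [Finset.sum_congr rfl (fun k'' _ => step k'')]
        by_cases hj : j' = j
        · simp [hj, Finset.sum_sub_distrib, Fintype.sum_ite_eq']
        · simp [hj]
  have hMinj : Function.Injective M.mulVecLin := by
    rw [← LinearMap.ker_eq_bot, LinearMap.ker_eq_bot']
    intro c hc
    have hc' : M.mulVec c = 0 := by simpa using hc
    funext b
    obtain ⟨⟨k, hk⟩, j⟩ := b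
    have h0 := congrFun hc' (Sum.inr (k, j))
    rw [Matrix.mulVec, dotProduct] at h0
    have hsum : ∀ b : {k : Fin n // ¬ k = z} × Fin q, M (Sum.inr (k, j)) b * c b =
        (if ((⟨k, hk⟩, j) : {k : Fin n // ¬ k = z} × Fin q) = b then -(c b) else 0) := by
      rintro ⟨⟨k'', hk''⟩, j''⟩
      rw [hMinr]
      by_cases e1 : k = k'' <;> by_cases e2 : j = j'' <;>
        simp [hk, hk'', e1, e2, Prod.ext_iff, Subtype.ext_iff]
    rw [Finset.sum_congr rfl (fun b _ => hsum b), Fintype.sum_ite_eq] at h0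
    simpa [neg_eq_zero] using h0
  have hmem : ∀ c, M.mulVecLin c ∈ LinearMap.ker (Matrix.toLin' A) := by
    intro c
    rw [LinearMap.mem_ker, Matrix.toLin'_apply, Matrix.mulVecLin_apply,
      Matrix.mulVec_mulVec, hAM, Matrix.zero_mulVec]
  have hLinj : Function.Injective (LinearMap.codRestrict (LinearMap.ker (Matrix.toLin' A))
      M.mulVecLin hmem) := fun a b h => hMinj (congrArg Subtype.val h)
  have hcard : Module.finrank ℝ (({k : Fin n // ¬ k = z} × Fin q) → ℝ) = (n - 1) * q := by
    simp [Module.finrank_fintype_fun_eq_card, Fintype.card_subtype_compl,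
      Fintype.card_subtype_eq]
  have h2 : (n - 1) * q ≤ Module.finrank ℝ (LinearMap.ker (Matrix.toLin' A)) := by
    rw [← hcard]
    exact LinearMap.finrank_le_finrank_of_injective hLinj
  have h3 : LinearMap.ker (Matrix.toLin' A) ≤ Module.End.maxGenEigenspace (Matrix.toLin' A) 0 := by
    intro x hx
    rw [Module.End.mem_maxGenEigenspace]
    exact ⟨1, by simpa using LinearMap.mem_ker.mp hx⟩
  have hch : (Matrix.toLin' A).charpoly = A.charpoly := by
    have hm : LinearMap.toMatrix (Pi.basisFun ℝ (Fin p ⊕ Fin n × Fin q))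
        (Pi.basisFun ℝ (Fin p ⊕ Fin n × Fin q)) (Matrix.toLin' A) = A := by
      rw [LinearMap.toMatrix_eq_toMatrix']
      exact LinearMap.toMatrix'_toLin' A
    conv_lhs => rw [← LinearMap.charpoly_toMatrix (Matrix.toLin' A)
      (Pi.basisFun ℝ (Fin p ⊕ Fin n × Fin q))]
    rw [hm]
  have hmle : (n - 1) * q ≤ (A.charpoly).natTrailingDegree := by
    rw [← hch, ← LinearMap.finrank_maxGenEigenspace_zero_eq (Matrix.toLin' A)]
    exact h2.trans (Submodule.finrank_mono h3)
  have hXdvd : (X : ℝ[X]) ^ ((n - 1) * q) ∣ A.charpoly := by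
    rw [Polynomial.X_pow_dvd_iff]
    intro d hd
    exact Polynomial.coeff_eq_zero_of_lt_natTrailingDegree (hd.trans_le hmle)
  -- transfer via the substitution X ↦ X + 1
  have hσ : Polynomial.aeval (X + 1 : ℝ[X]) A.charpoly = (matC3 p q n B).charpoly := by
    have hmap : (Matrix.charmatrix A).map (Polynomial.aeval (X + 1 : ℝ[X])) =
        Matrix.charmatrix (matC3 p q n B) := by
      ext a b : 2
      by_cases h : a = b
      · subst h
        simp only [Matrix.map_apply, Matrix.charmatrix_apply_eq, hA, Matrix.add_apply,
          Matrix.one_apply_eq, map_add, map_sub, Polynomial.aeval_X, _root_.map_one,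
          Polynomial.aeval_C, Polynomial.algebraMap_eq, add_sub_add_right_eq_sub]
      · simp [Matrix.charmatrix_apply_ne _ _ _ h, hA, Matrix.add_apply,
          Matrix.one_apply_ne h, Polynomial.algebraMap_eq]
    rw [Matrix.charpoly, Matrix.charpoly, AlgHom.map_det, AlgHom.mapMatrix_apply, hmap]
  have hfin := map_dvd (Polynomial.aeval (X + 1 : ℝ[X])) hXdvd
  rw [map_pow, Polynomial.aeval_X, hσ] at hfin
  exact hfin

/-- `C` has `−1` as an eigenvalue with algebraic multiplicity at least `(n−1)q`, and `D` has
`−1` as an eigenvalue with algebraic multiplicity at least `(n−1)p`. -/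
theorem neg_one_eigenvalue_multiplicity (p q n : ℕ) (hn : 1 ≤ n)
    (B : Matrix (Fin p) (Fin q) ℝ) :
    (Polynomial.X + 1) ^ ((n - 1) * q) ∣ (matC3 p q n B).charpoly ∧
      (Polynomial.X + 1) ^ ((n - 1) * p) ∣ (matD3 p q n B).charpoly := by
  constructor
  · exact matC3_aux p q n hn B
  · have h : matD3 p q n B = matC3 q p n Bᵀ := by
      ext a b
      rcases a with j | ⟨k, i⟩ <;> rcases b with j' | ⟨k', i'⟩ <;> rfl
    rw [h]
    exact matC3_aux q p n hn Bᵀ
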